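/- For every real x ≥ 1 and every χ ∈ [0, 8/9): (1−√(1−χ))/(3√(1−χ)−1) ≤ x if and only if χ ≤ 4x(2x+1)/(3x+1)². In particular, 4x(2x+1)/(3x+1)² < 8/9 for all x ≥ 1 and tends to 8/9 as x → ∞. -/

import Mathlib

open Real Set Filter

theorem compactness_bound_from_density_ratio :
    (∀ x : ℝ, 1 ≤ x → ∀ χ ∈ Ico (0:ℝ) (8 / 9),
      ((1 - Real.sqrt (1 - χ)) / (3 * Real.sqrt (1 - χ) - 1) ≤ x ↔
        χ ≤ 4 * x * (2 * x + 1) / (3 * x + 1) ^ 2)) ∧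
    (∀ x : ℝ, 1 ≤ x → 4 * x * (2 * x + 1) / (3 * x + 1) ^ 2 < 8 / 9) ∧
    Tendsto (fun x : ℝ => 4 * x * (2 * x + 1) / (3 * x + 1) ^ 2) atTop
      (nhds (8 / 9)) := by
  refine ⟨?_, ?_, ?_⟩
  · intro x hx χ hχ
    obtain ⟨h0, h89⟩ := hχ
    set s := Real.sqrt (1 - χ) with hs
    have hsq : s ^ 2 = 1 - χ := Real.sq_sqrt (by linarith)
    have hs0 : 0 ≤ s := Real.sqrt_nonneg _
    have hs13 : 1 / 3 < s := by nlinarith [hsq]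
    have hxp : (0:ℝ) < 3 * x + 1 := by linarith
    rw [div_le_iff₀ (by linarith), le_div_iff₀ (by positivity)]
    constructor
    · intro h
      nlinarith [sq_nonneg (s * (3 * x + 1) - (x + 1))]
    · intro h
      have hab : 0 ≤ (s * (3 * x + 1)) ^ 2 - (x + 1) ^ 2 := by nlinarith [hsq]
      have hsum : 0 < s * (3 * x + 1) + (x + 1) := by
        have := mul_nonneg hs0 (le_of_lt hxp); linarith
      have hge : x + 1 ≤ s * (3 * x + 1) := by nlinarith [hab, hsum]
      linarith
  · intro x hx
    rw [div_lt_div_iff₀ (by positivity) (by norm_num)]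
    nlinarith
  · have hinv : Tendsto (fun x : ℝ => x⁻¹) atTop (nhds 0) := tendsto_inv_atTop_zero
    have h1 : Tendsto (fun x : ℝ => 8 + 4 * x⁻¹) atTop (nhds (8 + 4 * 0)) :=
      tendsto_const_nhds.add (hinv.const_mul 4)
    have h2 : Tendsto (fun x : ℝ => 9 + 6 * x⁻¹ + x⁻¹ * x⁻¹) atTop
        (nhds (9 + 6 * 0 + 0 * 0)) :=
      (tendsto_const_nhds.add (hinv.const_mul 6)).add (hinv.mul hinv)
    have h3 := h1.div h2 (by norm_num)
    norm_num at h3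
    refine h3.congr' ?_
    filter_upwards [eventually_gt_atTop (0:ℝ)] with x hx
    simp only [Pi.div_apply]
    field_simp
    ring
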